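/- For n ≥ 4, the total number of cycles in the complete bipartite Turán graph T_2(n) is at most 2e times the number of cycles of length 2⌊n/2⌋ in T_2(n). -/

import Mathlib

open SimpleGraph Finset

/-- The cycle graph on `ZMod r`. -/
def cycGraph (r : ℕ) : SimpleGraph (ZMod r) := SimpleGraph.fromRel (fun a b => a = b + 1)

/-- The number of injective graph homomorphisms from `H` to `G`
(labelled copies of `H` as a subgraph of `G`). -/
noncomputable def copyCnt {α β : Type*} (H : SimpleGraph α) (G : SimpleGraph β) : ℕ :=
  Nat.card {f : α → β // Function.Injective f ∧ ∀ a b, H.Adj a b → G.Adj (f a) (f b)}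

/-- The number of cycles of length `r` in `G`, counted as subgraphs
(i.e. up to starting vertex and orientation). -/
noncomputable def cycCount {V : Type*} (r : ℕ) (G : SimpleGraph V) : ℕ := copyCnt (cycGraph r) G / (2 * r)

/-- The total number of cycles in `G`. -/
noncomputable def totCycCount {V : Type*} [Fintype V] (G : SimpleGraph V) : ℕ :=
  ∑ r ∈ Finset.Icc 3 (Fintype.card V), cycCount r G

/-- The number of Hamiltonian cycles in `G`. -/
noncomputable def hamCnt {V : Type*} [Fintype V] (G : SimpleGraph V) : ℕ := cycCount (Fintype.card V) G

/-- `G` contains no subgraph isomorphic to `H`. -/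
def Freeof {α β : Type*} (H : SimpleGraph α) (G : SimpleGraph β) : Prop :=
  ¬ ∃ f : α → β, Function.Injective f ∧ ∀ a b, H.Adj a b → G.Adj (f a) (f b)

lemma cyc_adj {r : ℕ} (hr : 2 ≤ r) (m : ℕ) :
    (cycGraph r).Adj ((m+1 : ℕ) : ZMod r) ((m : ℕ) : ZMod r) := by
  haveI : Fact (1 < r) := ⟨hr⟩
  rw [cycGraph, SimpleGraph.fromRel_adj]
  refine ⟨fun h => ?_, Or.inl (by push_cast; ring)⟩
  have : ((m:ZMod r) + 1) = (m : ZMod r) := by push_cast at h ⊢; linear_combination h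
  exact one_ne_zero (by linear_combination this)

lemma hom_parity {n r : ℕ} (hr : 2 ≤ r) (f : ZMod r → Fin n)
    (hf : ∀ a b, (cycGraph r).Adj a b → (turanGraph n 2).Adj (f a) (f b)) (m : ℕ) :
    ((f (m : ZMod r)) : ℕ) % 2 = (((f (0 : ZMod r)) : ℕ) + m) % 2 := by
  induction m with
  | zero => simp
  | succ m ih =>
    have h2 : ((f ((m+1 : ℕ) : ZMod r)) : ℕ) % 2 ≠ ((f ((m : ℕ) : ZMod r)) : ℕ) % 2 :=
      hf _ _ (cyc_adj hr m)
    omega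

lemma copyCnt_odd {n r : ℕ} (hr : 3 ≤ r) (hodd : r % 2 = 1) :
    copyCnt (cycGraph r) (turanGraph n 2) = 0 := by
  rw [copyCnt, Nat.card_eq_zero]
  left
  constructor
  rintro ⟨f, _, hf⟩
  have h := hom_parity (by omega) f hf r
  rw [ZMod.natCast_self] at h
  omega

section Glue
variable {n k : ℕ}

def glue (hk : 0 < k) (g h : Fin k → Fin n) (i : ZMod (2*k)) : Fin n :=
  haveI : NeZero (2*k) := ⟨by omega⟩
  if i.val % 2 = 0 then g ⟨i.val / 2, by have := ZMod.val_lt i; omega⟩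
  else h ⟨i.val / 2, by have := ZMod.val_lt i; omega⟩

lemma glue_even (hk : 0 < k) (g h : Fin k → Fin n) (j : Fin k) :
    glue hk g h ((2*j.val : ℕ) : ZMod (2*k)) = g j := by
  haveI : NeZero (2*k) := ⟨by omega⟩
  have hv : ((2*j.val : ℕ) : ZMod (2*k)).val = 2*j.val :=
    ZMod.val_cast_of_lt (by omega)
  unfold glue
  split_ifs with hc
  · exact congrArg g (Fin.ext (by simp only [Fin.val_mk]; omega))
  · exact (hc (by rw [hv]; omega)).elim

lemma glue_odd (hk : 0 < k) (g h : Fin k → Fin n) (j : Fin k) :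
    glue hk g h ((2*j.val+1 : ℕ) : ZMod (2*k)) = h j := by
  haveI : NeZero (2*k) := ⟨by omega⟩
  have hv : ((2*j.val+1 : ℕ) : ZMod (2*k)).val = 2*j.val+1 :=
    ZMod.val_cast_of_lt (by omega)
  unfold glue
  split_ifs with hc
  · rw [hv] at hc; omega
  · exact congrArg h (Fin.ext (by simp only [Fin.val_mk]; omega))

lemma glue_sections (hk : 0 < k) (f : ZMod (2*k) → Fin n) :
    glue hk (fun j => f ((2*j.val : ℕ) : ZMod (2*k))) (fun j => f ((2*j.val+1 : ℕ) : ZMod (2*k))) = f := by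
  haveI : NeZero (2*k) := ⟨by omega⟩
  funext i
  unfold glue
  split_ifs with hc
  · exact congrArg f (by rw [show (2*(i.val/2) : ℕ) = i.val by omega]; exact ZMod.natCast_zmod_val i)
  · exact congrArg f (by rw [show (2*(i.val/2)+1 : ℕ) = i.val by omega]; exact ZMod.natCast_zmod_val i)

def glueEquiv (hk : 0 < k) (Q : (ZMod (2*k) → Fin n) → Prop) :
    {f : ZMod (2*k) → Fin n // Q f} ≃
      {p : (Fin k → Fin n) × (Fin k → Fin n) // Q (glue hk p.1 p.2)} where
  toFun f := ⟨(fun j => f.1 ((2*j.val : ℕ) : ZMod (2*k)), fun j => f.1 ((2*j.val+1 : ℕ) : ZMod (2*k))),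
    by rw [glue_sections]; exact f.2⟩
  invFun p := ⟨glue hk p.1.1 p.1.2, p.2⟩
  left_inv f := Subtype.ext (glue_sections hk f.1)
  right_inv p := Subtype.ext (Prod.ext (funext fun j => glue_even hk p.1.1 p.1.2 j)
    (funext fun j => glue_odd hk p.1.1 p.1.2 j))

end Glue

section Char
variable {n k : ℕ}

lemma glue_parity (hk : 0 < k) (g h : Fin k → Fin n) {c : ℕ}
    (hge : ∀ j, ((g j : ℕ)) % 2 = c) (hho : ∀ j, ((h j : ℕ)) % 2 = (c+1) % 2)
    (i : ZMod (2*k)) : ((glue hk g h i : ℕ)) % 2 = (i.val + c) % 2 := by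
  haveI : NeZero (2*k) := ⟨by omega⟩
  have hc2 : c < 2 := by have := hge ⟨0, hk⟩; omega
  unfold glue
  split_ifs with hc
  · rw [hge]; omega
  · rw [hho]; omega

lemma glue_good (hk0 : 0 < k) (hk : 2 ≤ k) (g h : Fin k → Fin n) {c : ℕ}
    (hge : ∀ j, ((g j : ℕ)) % 2 = c) (hho : ∀ j, ((h j : ℕ)) % 2 = (c+1) % 2)
    (hg : Function.Injective g) (hh : Function.Injective h) :
    Function.Injective (glue hk0 g h) ∧
      ∀ a b, (cycGraph (2*k)).Adj a b → (turanGraph n 2).Adj (glue hk0 g h a) (glue hk0 g h b) := by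
  haveI : NeZero (2*k) := ⟨by omega⟩
  haveI : Fact (1 < 2*k) := ⟨by omega⟩
  have hpar := glue_parity hk0 g h hge hho
  constructor
  · intro i i' e
    have h2 : (i.val + c) % 2 = (i'.val + c) % 2 := by rw [← hpar i, ← hpar i', e]
    have hiv : ∀ x y : ZMod (2*k), x.val = y.val → x = y := by
      intro x y hxy
      rw [← ZMod.natCast_zmod_val x, ← ZMod.natCast_zmod_val y, hxy]
    revert e
    unfold glue
    split_ifs with c1 c2 c2 <;> intro e
    · have := congrArg Fin.val (hg e)
      simp only [Fin.val_mk] at this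
      exact hiv _ _ (by omega)
    · omega
    · omega
    · have := congrArg Fin.val (hh e)
      simp only [Fin.val_mk] at this
      exact hiv _ _ (by omega)
  · intro a b hadj
    rw [cycGraph, SimpleGraph.fromRel_adj] at hadj
    obtain ⟨hne, hor⟩ := hadj
    have hval : a.val % 2 ≠ b.val % 2 := by
      rcases hor with hab | hab
      · rw [hab, ZMod.val_add, ZMod.val_one, Nat.mod_mod_of_dvd _ ⟨k, rfl⟩]
        omega
      · rw [hab, ZMod.val_add, ZMod.val_one, Nat.mod_mod_of_dvd _ ⟨k, rfl⟩]
        omega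
    have key : ((glue hk0 g h a : ℕ)) % 2 ≠ ((glue hk0 g h b : ℕ)) % 2 := by
      rw [hpar a, hpar b]; omega
    exact key

lemma glue_mem_iff (hk0 : 0 < k) (hk : 2 ≤ k) (g h : Fin k → Fin n) :
    (Function.Injective (glue hk0 g h) ∧
      ∀ a b, (cycGraph (2*k)).Adj a b → (turanGraph n 2).Adj (glue hk0 g h a) (glue hk0 g h b))
    ↔ ((Function.Injective g ∧ ∀ j, ((g j : ℕ)) % 2 = 0) ∧
        (Function.Injective h ∧ ∀ j, ((h j : ℕ)) % 2 = 1)) ∨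
      ((Function.Injective g ∧ ∀ j, ((g j : ℕ)) % 2 = 1) ∧
        (Function.Injective h ∧ ∀ j, ((h j : ℕ)) % 2 = 0)) := by
  haveI : NeZero (2*k) := ⟨by omega⟩
  constructor
  · rintro ⟨hinj, hhom⟩
    have hp := hom_parity (by omega) _ hhom
    have hge : ∀ j : Fin k, ((g j : ℕ)) % 2 = (((glue hk0 g h 0 : ℕ)) + 0) % 2 := by
      intro j
      have := hp (2*j.val)
      rw [glue_even] at this
      omega
    have hho : ∀ j : Fin k, ((h j : ℕ)) % 2 = (((glue hk0 g h 0 : ℕ)) + 1) % 2 := by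
      intro j
      have := hp (2*j.val+1)
      rw [glue_odd] at this
      omega
    have hginj : Function.Injective g := by
      intro j j' e
      have e2 : glue hk0 g h ((2*j.val : ℕ) : ZMod (2*k)) = glue hk0 g h ((2*j'.val : ℕ) : ZMod (2*k)) := by
        rw [glue_even, glue_even]; exact e
      have := congrArg ZMod.val (hinj e2)
      rw [ZMod.val_cast_of_lt (by omega), ZMod.val_cast_of_lt (by omega)] at this
      exact Fin.ext (by omega)
    have hhinj : Function.Injective h := by
      intro j j' e
      have e2 : glue hk0 g h ((2*j.val+1 : ℕ) : ZMod (2*k)) = glue hk0 g h ((2*j'.val+1 : ℕ) : ZMod (2*k)) := by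
        rw [glue_odd, glue_odd]; exact e
      have := congrArg ZMod.val (hinj e2)
      rw [ZMod.val_cast_of_lt (by omega), ZMod.val_cast_of_lt (by omega)] at this
      exact Fin.ext (by omega)
    rcases Nat.mod_two_eq_zero_or_one ((glue hk0 g h 0 : ℕ)) with h0 | h0
    · exact Or.inl ⟨⟨hginj, fun j => by have := hge j; omega⟩,
        ⟨hhinj, fun j => by have := hho j; omega⟩⟩
    · exact Or.inr ⟨⟨hginj, fun j => by have := hge j; omega⟩,
        ⟨hhinj, fun j => by have := hho j; omega⟩⟩
  · rintro (⟨⟨hg, hge⟩, ⟨hh, hho⟩⟩ | ⟨⟨hg, hge⟩, ⟨hh, hho⟩⟩)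
    · exact glue_good hk0 hk g h (c := 0) hge (fun j => by rw [hho]) hg hh
    · exact glue_good hk0 hk g h (c := 1) hge (fun j => by rw [hho]) hg hh

end Char

section Count

def embEquiv {α β : Type*} (p : β → Prop) :
    {g : α → β // Function.Injective g ∧ ∀ j, p (g j)} ≃ (α ↪ {v : β // p v}) where
  toFun g := ⟨fun j => ⟨g.1 j, g.2.2 j⟩, fun a b hab => g.2.1 (congrArg Subtype.val hab)⟩
  invFun e := ⟨fun j => (e j).1, fun a b hab => e.injective (Subtype.ext hab), fun j => (e j).2⟩
  left_inv g := rfl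
  right_inv e := rfl

lemma filt_card (n c : ℕ) (hc : c < 2) :
    (((range n).filter (fun v => v % 2 = c)).card) = (n + 1 - c) / 2 := by
  induction n with
  | zero => interval_cases c <;> simp
  | succ m ih =>
    rw [range_add_one, filter_insert]
    split_ifs with h
    · rw [card_insert_of_notMem (by simp)]; omega
    · omega

lemma card_parity (n c : ℕ) (hc : c < 2) :
    Nat.card {v : Fin n // (v : ℕ) % 2 = c} = (n + 1 - c) / 2 := by
  rw [Nat.card_eq_fintype_card, Fintype.card_subtype, ← filt_card n c hc]
  apply Finset.card_bij (fun (a : Fin n) _ => (a : ℕ))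
  · intro a ha
    simp only [mem_filter, mem_range] at *
    exact ⟨a.2, ha.2⟩
  · intro a _ b _ hab
    exact Fin.ext hab
  · intro b hb
    simp only [mem_filter, mem_range] at hb
    exact ⟨⟨b, hb.1⟩, by simp [hb.2], rfl⟩

lemma card_inj_emb (n k c : ℕ) (hc : c < 2) :
    Nat.card {g : Fin k → Fin n // Function.Injective g ∧ ∀ j, ((g j : ℕ)) % 2 = c} =
      ((n + 1 - c) / 2).descFactorial k := by
  rw [Nat.card_congr (embEquiv (α := Fin k) (β := Fin n) (fun v => (v : ℕ) % 2 = c)),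
    Nat.card_eq_fintype_card, Fintype.card_embedding_eq,
    Fintype.card_fin, ← Nat.card_eq_fintype_card, card_parity n c hc]

lemma copyCnt_even (n k : ℕ) (hk : 2 ≤ k) :
    copyCnt (cycGraph (2*k)) (turanGraph n 2) =
      2 * (((n+1)/2).descFactorial k * ((n/2).descFactorial k)) := by
  classical
  have hk0 : 0 < k := by omega
  set A0 : (Fin k → Fin n) → Prop := fun g => Function.Injective g ∧ ∀ j, ((g j : ℕ)) % 2 = 0 with hA0
  set A1 : (Fin k → Fin n) → Prop := fun g => Function.Injective g ∧ ∀ j, ((g j : ℕ)) % 2 = 1 with hA1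
  have hdisj : Disjoint (fun p : (Fin k → Fin n) × (Fin k → Fin n) => A0 p.1 ∧ A1 p.2)
      (fun p => A1 p.1 ∧ A0 p.2) := by
    rw [Pi.disjoint_iff]
    intro p
    simp only [disjoint_iff_inf_le, le_Prop_eq, inf_Prop_eq]
    rintro ⟨⟨⟨_, h1⟩, _⟩, ⟨_, h2⟩, _⟩
    have := h1 ⟨0, hk0⟩
    have := h2 ⟨0, hk0⟩
    omega
  have e1 : {f : ZMod (2*k) → Fin n // Function.Injective f ∧
        ∀ a b, (cycGraph (2*k)).Adj a b → (turanGraph n 2).Adj (f a) (f b)} ≃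
      {p : (Fin k → Fin n) × (Fin k → Fin n) // Function.Injective (glue hk0 p.1 p.2) ∧
        ∀ a b, (cycGraph (2*k)).Adj a b →
          (turanGraph n 2).Adj (glue hk0 p.1 p.2 a) (glue hk0 p.1 p.2 b)} :=
    glueEquiv hk0 _
  have e2 : {p : (Fin k → Fin n) × (Fin k → Fin n) // Function.Injective (glue hk0 p.1 p.2) ∧
        ∀ a b, (cycGraph (2*k)).Adj a b →
          (turanGraph n 2).Adj (glue hk0 p.1 p.2 a) (glue hk0 p.1 p.2 b)} ≃
      {p : (Fin k → Fin n) × (Fin k → Fin n) // (A0 p.1 ∧ A1 p.2) ∨ (A1 p.1 ∧ A0 p.2)} :=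
    Equiv.subtypeEquivRight (fun p => glue_mem_iff hk0 hk p.1 p.2)
  have e4 : {p : (Fin k → Fin n) × (Fin k → Fin n) // (fun q : (Fin k → Fin n) × (Fin k → Fin n) => A0 q.1 ∧ A1 q.2) p ∨ (fun q : (Fin k → Fin n) × (Fin k → Fin n) => A1 q.1 ∧ A0 q.2) p} ≃
      ({p : (Fin k → Fin n) × (Fin k → Fin n) // A0 p.1 ∧ A1 p.2} ⊕
        {p : (Fin k → Fin n) × (Fin k → Fin n) // A1 p.1 ∧ A0 p.2}) :=
    subtypeOrEquiv _ _ hdisj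
  have e3 := e1.trans (e2.trans e4)
  rw [copyCnt, Nat.card_congr e3, Nat.card_sum,
    Nat.card_congr (Equiv.subtypeProdEquivProd (p := A0) (q := A1)),
    Nat.card_congr (Equiv.subtypeProdEquivProd (p := A1) (q := A0)),
    Nat.card_prod, Nat.card_prod, hA0, hA1,
    card_inj_emb n k 0 (by omega), card_inj_emb n k 1 (by omega)]
  simp only [Nat.sub_zero, Nat.add_sub_cancel]
  ring

end Count

section Arith

lemma key_ineq (a b k : ℕ) (h2 : 2 ≤ k) (hk : k ≤ a) (hab : a ≤ b) :
    a * (b.descFactorial k * a.descFactorial k * (a-k).factorial) ≤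
      2 * k * (b.descFactorial a * a.descFactorial a) := by
  have h1 : a.descFactorial a = (a-k).factorial * a.descFactorial k := by
    rw [Nat.descFactorial_self, ← Nat.factorial_mul_descFactorial hk]
  have h2' : b.descFactorial a = (b-k).descFactorial (a-k) * b.descFactorial k :=
    (Nat.descFactorial_mul_descFactorial hk).symm
  have h3 : (a-k).factorial ≤ (b-k).descFactorial (a-k) := by
    calc (a-k).factorial = (a-k).descFactorial (a-k) := (Nat.descFactorial_self _).symm
    _ ≤ (b-k).descFactorial (a-k) := Nat.descFactorial_le _ (by omega)
  have h4 : a ≤ 2 * k * (a-k).factorial := by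
    rcases Nat.lt_or_ge (a-k) 2 with hj | hj
    · have hf : (a-k).factorial = 1 := by interval_cases h : (a-k) <;> simp
      rw [hf]; omega
    · have hjf : (a-k) ≤ (a-k).factorial := Nat.self_le_factorial _
      calc a = k + (a-k) := by omega
      _ ≤ 2*k*(a-k) := by nlinarith
      _ ≤ 2*k*(a-k).factorial := by
          exact Nat.mul_le_mul_left _ hjf
  rw [h1, h2']
  calc a * (b.descFactorial k * a.descFactorial k * (a-k).factorial)
      ≤ (2*k*(a-k).factorial) * (b.descFactorial k * a.descFactorial k * (a-k).factorial) := by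
        gcongr
    _ ≤ (2*k*(a-k).factorial) * (b.descFactorial k * a.descFactorial k * ((b-k).descFactorial (a-k))) := by
        gcongr
    _ = 2 * k * ((b-k).descFactorial (a-k) * b.descFactorial k * ((a-k).factorial * a.descFactorial k)) := by
        ring

lemma dvd_ham (a b : ℕ) (h2 : 2 ≤ a) (hab : a ≤ b) :
    2 * (2 * a) ∣ 2 * (b.descFactorial a * a.descFactorial a) := by
  rcases eq_or_lt_of_le h2 with h | h
  · subst h
    have hbb : 2 ∣ b.descFactorial 2 := by
      rcases b with _ | c
      · simp
      · show 2 ∣ (c+1).descFactorial 2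
        rw [show (2:ℕ) = 1 + 1 from rfl, Nat.descFactorial_succ, Nat.descFactorial_one,
          Nat.add_sub_cancel]
        exact (Nat.even_mul_succ_self c).two_dvd
    obtain ⟨m, hm⟩ := hbb
    refine ⟨m, ?_⟩
    rw [Nat.descFactorial_self, hm, show Nat.factorial 2 = 2 from rfl]
    ring
  · have hfac : 2 * a ∣ a.descFactorial a := by
      rw [Nat.descFactorial_self]
      obtain ⟨c, hc⟩ : 2 ∣ (a-1).factorial := Nat.dvd_factorial (by omega) (by omega)
      refine ⟨c, ?_⟩
      have : a.factorial = a * (a-1).factorial := by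
        rcases a with _ | a'
        · omega
        · rw [Nat.factorial_succ]; congr 1
      rw [this, hc]; ring
    obtain ⟨m, hm⟩ := hfac
    exact ⟨b.descFactorial a * m, by rw [hm]; ring⟩

end Arith

/-- The total number of cycles in `T₂(n)` is at most `2e` times the number of
cycles of length `2⌊n/2⌋` in `T₂(n)`, for `n ≥ 4`. -/
theorem stmt1 (n : ℕ) (hn : 4 ≤ n) :
    (totCycCount (SimpleGraph.turanGraph n 2) : ℝ) ≤
      2 * Real.exp 1 * (cycCount (2 * (n / 2)) (SimpleGraph.turanGraph n 2) : ℝ) := by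
  set a := n / 2 with ha
  set b := (n+1) / 2 with hb
  have ha2 : 2 ≤ a := by omega
  have hab : a ≤ b := by omega
  -- Step 1: reduce the sum to even cycle lengths
  have hodd : ∀ r, 3 ≤ r → r % 2 = 1 → cycCount r (turanGraph n 2) = 0 := by
    intro r hr h1
    rw [cycCount, copyCnt_odd hr h1, Nat.zero_div]
  have hsum : totCycCount (turanGraph n 2) = ∑ k ∈ Icc 2 a, cycCount (2*k) (turanGraph n 2) := by
    rw [totCycCount, Fintype.card_fin]
    rw [← Finset.sum_filter_of_ne (p := fun r => r % 2 = 0)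
      (fun x hx h => by
        by_contra hodd'
        exact h (hodd x (mem_Icc.mp hx).1 (by omega)))]
    refine Finset.sum_nbij' (fun r => r / 2) (fun k => 2 * k) ?_ ?_ ?_ ?_ ?_
    · intro r hr
      simp only [mem_filter, mem_Icc] at hr ⊢
      omega
    · intro k hk
      simp only [mem_filter, mem_Icc] at hk ⊢
      omega
    · intro r hr
      simp only [mem_filter, mem_Icc] at hr
      omega
    · intro k hk
      simp only [mem_filter, mem_Icc] at hk
      omega
    · intro r hr
      simp only [mem_filter, mem_Icc] at hr
      congr 1
      omega
  -- value of the long cycle count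
  have hC : (cycCount (2*a) (turanGraph n 2) : ℝ) =
      ((2 * (b.descFactorial a * a.descFactorial a) : ℕ) : ℝ) / ((2*(2*a) : ℕ) : ℝ) := by
    rw [cycCount, copyCnt_even n a ha2]
    exact Nat.cast_div (dvd_ham a b ha2 hab) (by positivity)
  -- per term bound
  have hterm : ∀ k ∈ Icc 2 a, (cycCount (2*k) (turanGraph n 2) : ℝ) ≤
      2 / ((a-k).factorial : ℝ) * (cycCount (2*a) (turanGraph n 2) : ℝ) := by
    intro k hk
    rw [mem_Icc] at hk
    have hkey := key_ineq a b k hk.1 hk.2 hab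
    have hkeyR : (a : ℝ) * ((b.descFactorial k : ℝ) * (a.descFactorial k : ℝ) * ((a-k).factorial : ℝ)) ≤
        2 * (k : ℝ) * ((b.descFactorial a : ℝ) * (a.descFactorial a : ℝ)) := by
      exact_mod_cast hkey
    calc (cycCount (2*k) (turanGraph n 2) : ℝ)
        ≤ ((copyCnt (cycGraph (2*k)) (turanGraph n 2) : ℕ) : ℝ) / ((2*(2*k) : ℕ) : ℝ) := by
          rw [cycCount]; exact Nat.cast_div_le
      _ = ((2 * (b.descFactorial k * a.descFactorial k) : ℕ) : ℝ) / ((2*(2*k) : ℕ) : ℝ) := by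
          rw [copyCnt_even n k hk.1]
      _ ≤ 2 / ((a-k).factorial : ℝ) * (cycCount (2*a) (turanGraph n 2) : ℝ) := by
          rw [hC, div_mul_div_comm]
          rw [div_le_div_iff₀ (by exact_mod_cast Nat.pos_of_ne_zero (by omega))
            (mul_pos (by exact_mod_cast (a-k).factorial_pos)
              (by exact_mod_cast Nat.pos_of_ne_zero (by omega)))]
          push_cast
          nlinarith [hkeyR]
  -- sum of inverse factorials
  have hfac : ∑ k ∈ Icc 2 a, (1:ℝ)/(((a-k).factorial : ℕ) : ℝ) ≤ Real.exp 1 := by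
    have h1 : ∑ k ∈ Icc 2 a, (1:ℝ)/(((a-k).factorial : ℕ) : ℝ) =
        ∑ j ∈ (Icc 2 a).image (fun k => a - k), (1:ℝ)/((j.factorial : ℕ) : ℝ) := by
      rw [Finset.sum_image]
      intro x hx y hy hxy
      rw [Finset.mem_coe, mem_Icc] at hx hy
      dsimp only at hxy
      omega
    rw [h1]
    calc ∑ j ∈ (Icc 2 a).image (fun k => a - k), (1:ℝ)/((j.factorial : ℕ) : ℝ)
        ≤ ∑ j ∈ range a, (1:ℝ)/((j.factorial : ℕ) : ℝ) := by
          apply Finset.sum_le_sum_of_subset_of_nonneg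
          · intro j hj
            simp only [mem_image, mem_Icc] at hj
            obtain ⟨x, hx, rfl⟩ := hj
            rw [mem_range]
            omega
          · intro j _ _
            positivity
      _ ≤ Real.exp 1 := by
          have := Real.sum_le_exp_of_nonneg (x := 1) (by norm_num) a
          simpa using this
  -- put everything together
  rw [hsum]
  push_cast
  calc ∑ k ∈ Icc 2 a, (cycCount (2*k) (turanGraph n 2) : ℝ)
      ≤ ∑ k ∈ Icc 2 a, 2 / ((a-k).factorial : ℝ) * (cycCount (2*a) (turanGraph n 2) : ℝ) := Finset.sum_le_sum hterm
    _ = (∑ k ∈ Icc 2 a, (1:ℝ)/(((a-k).factorial : ℕ) : ℝ)) * (2 * (cycCount (2*a) (turanGraph n 2) : ℝ)) := by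
        rw [Finset.sum_mul]
        apply Finset.sum_congr rfl
        intro k _
        ring
    _ ≤ Real.exp 1 * (2 * (cycCount (2*a) (turanGraph n 2) : ℝ)) := by
        apply mul_le_mul_of_nonneg_right hfac
        positivity
    _ = 2 * Real.exp 1 * (cycCount (2*a) (turanGraph n 2) : ℝ) := by ring
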